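/- Let A and B be n×n real matrices with nonnegative entries, and for l ≥ 0 set C_l = Σ_{j=0}^{l} Bʲ. Then for all integers t > t₀ ≥ 0 the following entrywise inequalities hold: Σ_{l=0}^{t₀} Aˡ·C_{t−t₀} + A^{t₀+1}·Σ_{l=0}^{t−t₀−1} Aˡ ≤ Σ_{s=0}^{t} Σ_{l=0}^{s} Aˡ·B^{s−l} ≤ Σ_{l=0}^{t₀} Aˡ·C_t + A^{t₀+1}·Σ_{l=0}^{t−t₀−1} Aˡ·C_{t−t₀−1}. (The two finite-time sandwich bounds established in the proof of Lemma 3.) -/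

import Mathlib

open Matrix Filter Finset

/-- Spectral radius of a real square matrix: the maximum modulus of its complex
eigenvalues (elements of the spectrum of the matrix viewed over `ℂ`). -/
noncomputable def specRad {n : ℕ} (M : Matrix (Fin n) (Fin n) ℝ) : ℝ :=
  sSup {r : ℝ | ∃ μ : ℂ, μ ∈ spectrum ℂ (M.map (Complex.ofReal)) ∧ r = ‖μ‖}

lemma scalar_sandwich (g : ℕ → ℕ → ℝ) (hg : ∀ l m, 0 ≤ g l m)
    (t t₀ : ℕ) (ht : t₀ < t) :
    ((∑ l ∈ Finset.range (t₀ + 1), ∑ m ∈ Finset.range (t - t₀ + 1), g l m) +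
        ∑ k ∈ Finset.range (t - t₀), g (t₀ + 1 + k) 0 ≤
      ∑ s ∈ Finset.range (t + 1), ∑ l ∈ Finset.range (s + 1), g l (s - l)) ∧
    (∑ s ∈ Finset.range (t + 1), ∑ l ∈ Finset.range (s + 1), g l (s - l) ≤
      (∑ l ∈ Finset.range (t₀ + 1), ∑ m ∈ Finset.range (t + 1), g l m) +
        ∑ k ∈ Finset.range (t - t₀), ∑ m ∈ Finset.range (t - t₀), g (t₀ + 1 + k) m) := by
  set T : Finset (ℕ × ℕ) :=
    (Finset.range (t + 1) ×ˢ Finset.range (t + 1)).filter (fun p => p.1 + p.2 ≤ t) with hT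
  have hmid : ∑ s ∈ Finset.range (t + 1), ∑ l ∈ Finset.range (s + 1), g l (s - l)
      = ∑ p ∈ T, g p.1 p.2 := by
    rw [Finset.sum_sigma']
    refine Finset.sum_nbij' (fun p => (p.2, p.1 - p.2)) (fun q => ⟨q.1 + q.2, q.1⟩)
      ?_ ?_ ?_ ?_ ?_
    · rintro ⟨s, l⟩ hm
      simp only [Finset.mem_sigma, Finset.mem_range] at hm
      simp only [hT, Finset.mem_filter, Finset.mem_product, Finset.mem_range]
      omega
    · rintro ⟨l, m⟩ hq
      simp only [hT, Finset.mem_filter, Finset.mem_product, Finset.mem_range] at hq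
      simp only [Finset.mem_sigma, Finset.mem_range]
      omega
    · rintro ⟨s, l⟩ hm
      simp only [Finset.mem_sigma, Finset.mem_range] at hm
      simp only [Sigma.mk.inj_iff]
      constructor
      · omega
      · exact heq_of_eq rfl
    · rintro ⟨l, m⟩ hq
      simp
    · rintro ⟨s, l⟩ hm
      rfl
  rw [hmid]
  constructor
  · -- lower bound
    set P1 : Finset (ℕ × ℕ) := Finset.range (t₀ + 1) ×ˢ Finset.range (t - t₀ + 1) with hP1
    set P2 : Finset (ℕ × ℕ) := (Finset.range (t - t₀)).image (fun k => (t₀ + 1 + k, 0)) with hP2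
    have e1 : ∑ l ∈ Finset.range (t₀ + 1), ∑ m ∈ Finset.range (t - t₀ + 1), g l m
        = ∑ p ∈ P1, g p.1 p.2 := by rw [hP1, Finset.sum_product]
    have e2 : ∑ k ∈ Finset.range (t - t₀), g (t₀ + 1 + k) 0 = ∑ p ∈ P2, g p.1 p.2 := by
      rw [hP2, Finset.sum_image]
      intro a _ b _ h
      simpa using h
    have hdisj : Disjoint P1 P2 := by
      rw [Finset.disjoint_left]
      rintro ⟨a, b⟩ h1 h2
      simp only [hP1, Finset.mem_product, Finset.mem_range] at h1
      simp only [hP2, Finset.mem_image, Finset.mem_range, Prod.mk.injEq] at h2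
      obtain ⟨k, hk, hk1, hk2⟩ := h2
      omega
    rw [e1, e2, ← Finset.sum_union hdisj]
    apply Finset.sum_le_sum_of_subset_of_nonneg
    · intro p hp
      simp only [Finset.mem_union, hP1, hP2, Finset.mem_product, Finset.mem_image,
        Finset.mem_range, Prod.mk.injEq] at hp
      simp only [hT, Finset.mem_filter, Finset.mem_product, Finset.mem_range]
      rcases hp with h | ⟨k, hk, hk1, hk2⟩
      · omega
      · omega
    · intro p _ _
      exact hg p.1 p.2
  · -- upper bound
    set Q1 : Finset (ℕ × ℕ) := Finset.range (t₀ + 1) ×ˢ Finset.range (t + 1) with hQ1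
    set Q2 : Finset (ℕ × ℕ) :=
      (Finset.range (t - t₀) ×ˢ Finset.range (t - t₀)).image
        (fun q => (t₀ + 1 + q.1, q.2)) with hQ2
    have e1 : ∑ l ∈ Finset.range (t₀ + 1), ∑ m ∈ Finset.range (t + 1), g l m
        = ∑ p ∈ Q1, g p.1 p.2 := by rw [hQ1, Finset.sum_product]
    have e2 : ∑ k ∈ Finset.range (t - t₀), ∑ m ∈ Finset.range (t - t₀), g (t₀ + 1 + k) m
        = ∑ p ∈ Q2, g p.1 p.2 := by
      rw [hQ2, Finset.sum_image, Finset.sum_product]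
      rintro ⟨a, b⟩ _ ⟨c, d⟩ _ h
      simp only [Prod.mk.injEq] at h
      simp only [Prod.mk.injEq]
      omega
    have hdisj : Disjoint Q1 Q2 := by
      rw [Finset.disjoint_left]
      rintro ⟨a, b⟩ h1 h2
      simp only [hQ1, Finset.mem_product, Finset.mem_range] at h1
      simp only [hQ2, Finset.mem_image, Finset.mem_product, Finset.mem_range,
        Prod.mk.injEq, Prod.exists] at h2
      obtain ⟨k, m, ⟨hk, hm⟩, hk1, hk2⟩ := h2
      omega
    rw [e1, e2, ← Finset.sum_union hdisj]
    apply Finset.sum_le_sum_of_subset_of_nonneg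
    · rintro ⟨a, b⟩ hp
      simp only [hT, Finset.mem_filter, Finset.mem_product, Finset.mem_range] at hp
      simp only [Finset.mem_union, hQ1, hQ2, Finset.mem_product, Finset.mem_image,
        Finset.mem_range, Prod.mk.injEq, Prod.exists]
      by_cases h : a ≤ t₀
      · left; omega
      · right; exact ⟨a - t₀ - 1, b, ⟨by omega, by omega⟩, by omega, rfl⟩
    · intro p _ _
      exact hg p.1 p.2

lemma mul_entry_nonneg {n : ℕ} {M N : Matrix (Fin n) (Fin n) ℝ}
    (hM : ∀ i j, 0 ≤ M i j) (hN : ∀ i j, 0 ≤ N i j) : ∀ i j, 0 ≤ (M * N) i j := by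
  intro i j
  rw [Matrix.mul_apply]
  exact Finset.sum_nonneg fun k _ => mul_nonneg (hM i k) (hN k j)

lemma pow_entry_nonneg {n : ℕ} {M : Matrix (Fin n) (Fin n) ℝ}
    (hM : ∀ i j, 0 ≤ M i j) : ∀ m i j, 0 ≤ (M ^ m) i j := by
  intro m
  induction m with
  | zero => intro i j; simp [Matrix.one_apply]; positivity
  | succ k ih =>
    rw [pow_succ]
    exact mul_entry_nonneg ih hM

/-- The two finite-time sandwich bounds from the proof of Lemma 3, with
`C_l = Σ_{j=0}^{l} Bʲ`; all inequalities are entrywise. -/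
theorem matrix_double_sum_sandwich
    (n : ℕ) (hn : 1 ≤ n) (A B : Matrix (Fin n) (Fin n) ℝ)
    (hA : ∀ i j, 0 ≤ A i j) (hB : ∀ i j, 0 ≤ B i j)
    (C : ℕ → Matrix (Fin n) (Fin n) ℝ)
    (hC : ∀ l, C l = ∑ j ∈ Finset.range (l + 1), B ^ j)
    (t t₀ : ℕ) (ht : t₀ < t) :
    (∀ i j,
      ((∑ l ∈ Finset.range (t₀ + 1), A ^ l * C (t - t₀)) +
        A ^ (t₀ + 1) * ∑ l ∈ Finset.range (t - t₀ - 1 + 1), A ^ l) i j ≤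
      (∑ s ∈ Finset.range (t + 1), ∑ l ∈ Finset.range (s + 1),
        A ^ l * B ^ (s - l)) i j) ∧
    (∀ i j,
      (∑ s ∈ Finset.range (t + 1), ∑ l ∈ Finset.range (s + 1),
        A ^ l * B ^ (s - l)) i j ≤
      ((∑ l ∈ Finset.range (t₀ + 1), A ^ l * C t) +
        A ^ (t₀ + 1) * ∑ l ∈ Finset.range (t - t₀ - 1 + 1),
          A ^ l * C (t - t₀ - 1)) i j) := by
  have hrange : t - t₀ - 1 + 1 = t - t₀ := by omega
  have key : ∀ i j, _ ∧ _ := fun i j =>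
    scalar_sandwich (fun l m => (A ^ l * B ^ m) i j)
      (fun l m => mul_entry_nonneg (pow_entry_nonneg hA l) (pow_entry_nonneg hB m) i j)
      t t₀ ht
  constructor
  · intro i j
    have h := (key i j).1
    have emid : (∑ s ∈ Finset.range (t + 1), ∑ l ∈ Finset.range (s + 1),
        A ^ l * B ^ (s - l)) i j
        = ∑ s ∈ Finset.range (t + 1), ∑ l ∈ Finset.range (s + 1),
          (A ^ l * B ^ (s - l)) i j := by simp [Matrix.sum_apply]
    have e1 : (∑ l ∈ Finset.range (t₀ + 1), A ^ l * C (t - t₀)) i j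
        = ∑ l ∈ Finset.range (t₀ + 1), ∑ m ∈ Finset.range (t - t₀ + 1),
          (A ^ l * B ^ m) i j := by
      simp [hC, Finset.mul_sum, Matrix.sum_apply]
    have e2 : (A ^ (t₀ + 1) * ∑ l ∈ Finset.range (t - t₀ - 1 + 1), A ^ l) i j
        = ∑ k ∈ Finset.range (t - t₀), (A ^ (t₀ + 1 + k) * B ^ 0) i j := by
      rw [hrange, Finset.mul_sum, Matrix.sum_apply]
      refine Finset.sum_congr rfl fun k _ => ?_
      rw [pow_zero, mul_one, ← pow_add]
    rw [Matrix.add_apply, emid, e1, e2]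
    exact h
  · intro i j
    have h := (key i j).2
    have emid : (∑ s ∈ Finset.range (t + 1), ∑ l ∈ Finset.range (s + 1),
        A ^ l * B ^ (s - l)) i j
        = ∑ s ∈ Finset.range (t + 1), ∑ l ∈ Finset.range (s + 1),
          (A ^ l * B ^ (s - l)) i j := by simp [Matrix.sum_apply]
    have e1 : (∑ l ∈ Finset.range (t₀ + 1), A ^ l * C t) i j
        = ∑ l ∈ Finset.range (t₀ + 1), ∑ m ∈ Finset.range (t + 1),
          (A ^ l * B ^ m) i j := by
      simp [hC, Finset.mul_sum, Matrix.sum_apply]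
    have e2 : (A ^ (t₀ + 1) * ∑ l ∈ Finset.range (t - t₀ - 1 + 1), A ^ l * C (t - t₀ - 1)) i j
        = ∑ k ∈ Finset.range (t - t₀), ∑ m ∈ Finset.range (t - t₀),
          (A ^ (t₀ + 1 + k) * B ^ m) i j := by
      rw [hrange, Finset.mul_sum, Matrix.sum_apply]
      refine Finset.sum_congr rfl fun k _ => ?_
      have : C (t - t₀ - 1) = ∑ m ∈ Finset.range (t - t₀), B ^ m := by
        rw [hC, hrange]
      rw [this, Finset.mul_sum, Finset.mul_sum, Matrix.sum_apply]
      refine Finset.sum_congr rfl fun m _ => ?_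
      rw [← mul_assoc, ← pow_add]
    rw [Matrix.add_apply, emid, e1, e2]
    exact h
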